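/- arXiv:math/0212324 — 2 statements merged into one kernel-verified Lean document; each statement's English description precedes it below -/
import Mathlib

section
/- Conversely, if two irrational numbers θ, θ' > 0 satisfy θ' = (aθ + b)/(cθ + d) with a, b, c, d ∈ ℤ and ad − bc = ±1, then their regular continued fraction expansions agree up to a shift: there exist m, k with a_{m+j} = b_{k+j} for all j ≥ 0. -/
namespace Serret11

noncomputable def app : List ℤ → ℝ → ℝ
  | [], y => y
  | e :: L, y => (e : ℝ) + 1 / app L y

lemma app_nil (y : ℝ) : app [] y = y := rfl
lemma app_cons (e : ℤ) (L : List ℤ) (y : ℝ) : app (e :: L) y = (e : ℝ) + 1 / app L y := rfl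

lemma app_gt_one : ∀ (L : List ℤ), (∀ e ∈ L, 1 ≤ e) → ∀ y : ℝ, 1 < y → 1 < app L y := by
  intro L
  induction L with
  | nil => intro _ y hy; simpa [app_nil] using hy
  | cons e L ih =>
    intro hL y hy
    have he : (1 : ℝ) ≤ (e : ℝ) := by exact_mod_cast hL e (by simp)
    have hT : 1 < app L y := ih (fun x hx => hL x (by simp [hx])) y hy
    have : 0 < 1 / app L y := by positivity
    rw [app_cons]; linarith

lemma decompAux : ∀ n : ℕ, ∀ a b c d : ℤ, c ≤ (n : ℤ) → d < c → 0 < d →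
    (a * d - b * c = 1 ∨ a * d - b * c = -1) →
    ∃ L : List ℤ, (∀ e ∈ L, 1 ≤ e) ∧
      ∀ y : ℝ, 1 < y → ((a : ℝ) * y + b) / ((c : ℝ) * y + d) = app ((a / c) :: L) y := by
  intro n
  induction n with
  | zero => intro a b c d hc hdc hd _; omega
  | succ n ih =>
    intro a b c d hcn hdc hd hdet
    have hc2 : 2 ≤ c := by omega
    set e0 := a / c with he0
    set r := a % c with hrdef
    set v := b - e0 * d with hvdef
    have hr0 : 0 ≤ r := Int.emod_nonneg a (by omega)
    have hrc : r < c := Int.emod_lt_of_pos a (by omega)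
    have hae : a = e0 * c + r := by
      have h := Int.mul_ediv_add_emod a c
      rw [he0, hrdef]; linear_combination -h
    have hbe : b = e0 * d + v := by rw [hvdef]; ring
    have hdet2 : c * v - d * r = -(a * d - b * c) := by
      rw [hae, hbe]; ring
    have hdet3 : c * v - d * r = 1 ∨ c * v - d * r = -1 := by
      rcases hdet with h | h
      · right; rw [hdet2, h]
      · left; rw [hdet2, h]; ring
    have hr1 : 1 ≤ r := by
      rcases lt_or_ge r 1 with h | h
      · exfalso
        have hr : r = 0 := by omega
        rw [hr] at hdet3
        rcases lt_trichotomy v 0 with hv | hv | hv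
        · rcases hdet3 with h' | h' <;> nlinarith
        · rcases hdet3 with h' | h' <;> nlinarith
        · rcases hdet3 with h' | h' <;> nlinarith
      · exact h
    have hv0 : 0 ≤ v := by
      rcases lt_or_ge v 0 with h | h
      · exfalso; rcases hdet3 with h' | h' <;> nlinarith
      · exact h
    have hvr : v ≤ r := by
      rcases lt_or_ge r v with h | h
      · exfalso; rcases hdet3 with h' | h' <;> nlinarith
      · exact h
    by_cases hv : v = 0
    · -- terminal: d = 1, r = 1
      have hd1 : d = 1 ∧ r = 1 := by
        rw [hv] at hdet3
        have hdr : d * r = 1 ∨ d * r = -1 := by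
          rcases hdet3 with h' | h'
          · right; linarith
          · left; linarith
        rcases hdr with h' | h'
        · rcases Int.mul_eq_one_iff_eq_one_or_neg_one.1 h' with ⟨h1, h2⟩ | ⟨h1, h2⟩ <;> omega
        · exfalso; have := mul_pos hd (show (0:ℤ) < r by omega); omega
      refine ⟨[c], by intro e he; simp at he; omega, ?_⟩
      intro y hy
      have hy0 : (0:ℝ) < y := by linarith
      have hy' : y ≠ 0 := ne_of_gt hy0
      have hcR : (1:ℝ) ≤ (c:ℝ) := by exact_mod_cast by omega
      have hdR : (0:ℝ) ≤ (d:ℝ) := by exact_mod_cast by omega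
      have h1 : ((c:ℝ) * y + d) ≠ 0 := by nlinarith
      have h2 : ((c:ℝ) + 1 / y) ≠ 0 := by positivity
      rw [app_cons, app_cons, app_nil]
      have haR : (a:ℝ) = (e0:ℝ) * c + 1 := by
        rw_mod_cast [hae, hd1.2]
      have hbR : (b:ℝ) = (e0:ℝ) := by
        rw_mod_cast [hbe, hv, hd1.1]; push_cast; ring
      have hdR' : (d:ℝ) = 1 := by exact_mod_cast hd1.1
      rw [haR, hbR, hdR']
      field_simp
      ring
    · by_cases hvr' : v = r
      · -- terminal: v = 1, c - d = 1
        have hv1' : 1 ≤ v := by omega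
        have hkey : (c - d) * v = c * v - d * r := by rw [hvr']; ring
        have hv1 : v = 1 ∧ c - d = 1 := by
          have hwv : (c - d) * v = 1 ∨ (c - d) * v = -1 := by
            rcases hdet3 with h' | h'
            · left; omega
            · right; omega
          rcases hwv with h' | h'
          · rcases Int.mul_eq_one_iff_eq_one_or_neg_one.1 h' with ⟨h1, h2⟩ | ⟨h1, h2⟩ <;> omega
          · exfalso
            have := mul_pos (show (0:ℤ) < c - d by omega) (show (0:ℤ) < v by omega)
            omega
        refine ⟨[c - 1, 1], by intro e he; simp at he; rcases he with h | h <;> omega, ?_⟩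
        intro y hy
        have hy0 : (0:ℝ) < y := by linarith
        have hy' : y ≠ 0 := ne_of_gt hy0
        have hcR : (2:ℝ) ≤ (c:ℝ) := by exact_mod_cast hc2
        have hr1' : r = 1 := by omega
        have haZ : a = e0 * c + 1 := by rw [hae, hr1']
        have hbZ : b = e0 * d + 1 := by rw [hbe, hv1.1]
        have hdZ : d = c - 1 := by omega
        have haR : (a:ℝ) = (e0:ℝ) * c + 1 := by exact_mod_cast haZ
        have hbR : (b:ℝ) = (e0:ℝ) * ((c:ℝ) - 1) + 1 := by
          rw [hbZ, hdZ]; push_cast; ring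
        have hdR : (d:ℝ) = (c:ℝ) - 1 := by rw [hdZ]; push_cast; ring
        have hden : (0:ℝ) < (c:ℝ) * y + ((c:ℝ) - 1) := by nlinarith
        have hden' : ((c:ℝ) * y + ((c:ℝ) - 1)) ≠ 0 := ne_of_gt hden
        have h2 : ((1:ℝ) + 1 / y) ≠ 0 := by positivity
        have hy1 : (y + 1) ≠ 0 := by positivity
        have key2 : ((((c:ℤ) - 1 : ℤ) : ℝ) + 1 / (((1:ℤ):ℝ) + 1 / y))
            = ((c:ℝ) * y + ((c:ℝ) - 1)) / (y + 1) := by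
          push_cast
          field_simp
          ring
        rw [app_cons, app_cons, app_cons, app_nil, key2, one_div_div, haR, hbR, hdR]
        field_simp
        ring
      · -- recursive case
        have hvlt : v < r := lt_of_le_of_ne hvr hvr'
        have hv1 : 1 ≤ v := by omega
        have hrn : r ≤ (n : ℤ) := by omega
        obtain ⟨L, hL, hLe⟩ := ih c d r v hrn hvlt (by omega) hdet3
        have hcr1 : 1 ≤ c / r := by
          calc (1:ℤ) = r / r := (Int.ediv_self (by omega)).symm
          _ ≤ c / r := Int.ediv_le_ediv (by omega) (by omega)
        refine ⟨(c / r) :: L, ?_, ?_⟩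
        · intro e he
          rcases List.mem_cons.1 he with h | h
          · omega
          · exact hL e h
        · intro y hy
          have hy0 : (0:ℝ) < y := by linarith
          have h1 : (0:ℝ) < (c:ℝ) * y + d := by
            have hcR : (1:ℝ) ≤ (c:ℝ) := by exact_mod_cast by omega
            have hdR : (0:ℝ) ≤ (d:ℝ) := by exact_mod_cast by omega
            nlinarith
          have h2 : (0:ℝ) < (r:ℝ) * y + v := by
            have hrR : (1:ℝ) ≤ (r:ℝ) := by exact_mod_cast hr1
            have hvR : (0:ℝ) ≤ (v:ℝ) := by exact_mod_cast hv0
            nlinarith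
          rw [app_cons, ← hLe y hy, one_div_div]
          have haR : (a:ℝ) = (e0:ℝ) * c + r := by exact_mod_cast hae
          have hbR : (b:ℝ) = (e0:ℝ) * d + v := by exact_mod_cast hbe
          rw [haR, hbR]
          field_simp
          ring


/-- (u n, v n, w n, z n): convergent-type matrix for coefficient sequence α. -/
def UV (α : ℕ → ℤ) : ℕ → ℤ × ℤ × ℤ × ℤ
  | 0 => (1, 0, 0, 1)
  | n + 1 =>
    let p := UV α n
    (p.1 * α n + p.2.1, p.1, p.2.2.1 * α n + p.2.2.2, p.2.2.1)

variable (α : ℕ → ℤ)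

def uu (n : ℕ) : ℤ := (UV α n).1
def vv (n : ℕ) : ℤ := (UV α n).2.1
def ww (n : ℕ) : ℤ := (UV α n).2.2.1
def zz (n : ℕ) : ℤ := (UV α n).2.2.2

@[simp] lemma uu0 : uu α 0 = 1 := rfl
@[simp] lemma vv0 : vv α 0 = 0 := rfl
@[simp] lemma ww0 : ww α 0 = 0 := rfl
@[simp] lemma zz0 : zz α 0 = 1 := rfl
lemma uuS (n : ℕ) : uu α (n+1) = uu α n * α n + vv α n := rfl
lemma vvS (n : ℕ) : vv α (n+1) = uu α n := rfl
lemma wwS (n : ℕ) : ww α (n+1) = ww α n * α n + zz α n := rfl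
lemma zzS (n : ℕ) : zz α (n+1) = ww α n := rfl

lemma det_UV (n : ℕ) : uu α n * zz α n - vv α n * ww α n = 1 ∨
    uu α n * zz α n - vv α n * ww α n = -1 := by
  induction n with
  | zero => left; simp
  | succ n ih =>
    rw [uuS, vvS, wwS, zzS]
    rcases ih with h | h
    · right; linear_combination -h
    · left; linear_combination -h

variable (t : ℕ → ℝ) (hrec : ∀ n, t n = (α n : ℝ) + 1 / t (n + 1))
  (ht1 : ∀ n, 1 < t (n + 1)) (hα : ∀ n, 1 ≤ α (n + 1))

include hrec ht1 in
/-- fundamental identity -/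
lemma UV_identity (n : ℕ) :
    (uu α n : ℝ) * t n + vv α n = t 0 * ((ww α n : ℝ) * t n + zz α n) := by
  induction n with
  | zero => simp
  | succ n ih =>
    have htn : t n * t (n+1) = (α n : ℝ) * t (n+1) + 1 := by
      have h0 : t (n+1) ≠ 0 := by have := ht1 n; linarith
      rw [hrec n]; field_simp
    rw [uuS, vvS, wwS, zzS]
    push_cast
    have : ((uu α n : ℝ) * α n + vv α n) * t (n+1) + uu α n
        = (uu α n * t n + vv α n) * t (n+1) := by
      linear_combination (-(uu α n : ℝ)) * htn
    rw [this]
    have : ((ww α n : ℝ) * α n + zz α n) * t (n+1) + ww α n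
        = (ww α n * t n + zz α n) * t (n+1) := by
      linear_combination (-(ww α n : ℝ)) * htn
    rw [this, ih]
    ring

include hrec ht1 in
lemma UV_denom_pos (n : ℕ) : 0 < (ww α n : ℝ) * t n + zz α n := by
  induction n with
  | zero => simp
  | succ n ih =>
    have htn : t n * t (n+1) = (α n : ℝ) * t (n+1) + 1 := by
      have h0 : t (n+1) ≠ 0 := by have := ht1 n; linarith
      rw [hrec n]; field_simp
    rw [wwS, zzS]
    push_cast
    have heq : ((ww α n : ℝ) * α n + zz α n) * t (n+1) + ww α n
        = ((ww α n : ℝ) * t n + zz α n) * t (n+1) := by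
      linear_combination (-(ww α n : ℝ)) * htn
    rw [heq]
    have := ht1 n
    nlinarith

include hrec ht1 in
lemma UV_eps (n : ℕ) : |(uu α n : ℝ) - t 0 * ww α n| ≤ 1 := by
  induction n with
  | zero => simp
  | succ n ih =>
    have hid := UV_identity α t hrec ht1 (n+1)
    rw [vvS, zzS] at hid
    have h1 : ((uu α (n+1) : ℝ) - t 0 * ww α (n+1)) * t (n+1)
        = -((uu α n : ℝ) - t 0 * ww α n) := by linear_combination hid
    have h2 := ht1 n
    have h3 : |((uu α (n+1) : ℝ) - t 0 * ww α (n+1))| * t (n+1)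
        = |(uu α n : ℝ) - t 0 * ww α n| := by
      rw [← abs_of_pos (show (0:ℝ) < t (n+1) by linarith), ← abs_mul, h1, abs_neg]
    nlinarith [abs_nonneg ((uu α (n+1) : ℝ) - t 0 * ww α (n+1))]

include hα in
lemma ww_pos : ∀ n : ℕ, 0 ≤ ww α n ∧ 1 ≤ ww α (n + 1) := by
  intro n
  induction n with
  | zero => simp [wwS]
  | succ n ih =>
    obtain ⟨h0, h1⟩ := ih
    refine ⟨by omega, ?_⟩
    have hw : ww α (n + 2) = ww α (n+1) * α (n+1) + ww α n := by
      rw [wwS, zzS]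
    have ha := hα n
    nlinarith

include hα in
lemma ww_gap (n : ℕ) : ww α n + ww α (n + 1) ≤ ww α (n + 2) := by
  have hw : ww α (n + 2) = ww α (n+1) * α (n+1) + ww α n := by rw [wwS, zzS]
  have ha := hα n
  have h1 := ww_pos α hα n
  nlinarith

include hα in
lemma ww_lb (n : ℕ) : (n : ℤ) + 1 ≤ ww α (n + 2) := by
  induction n with
  | zero => simpa using (ww_pos α hα 1).2
  | succ n ih =>
    have h1 := ww_gap α hα (n + 1)
    have h2 := (ww_pos α hα n).2
    have e1 : n + 1 + 1 = n + 2 := rfl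
    have e2 : n + 1 + 2 = n + 3 := rfl
    rw [e1, e2] at h1
    rw [e2]
    push_cast
    omega


end Serret11

/-- Serret's theorem: if irrationals θ, θ' > 0 satisfy θ' = (Aθ+B)/(Cθ+D) with
AD − BC = ±1, then their regular continued fraction expansions (given via the
Gauss map) agree up to a shift. -/
theorem stmt_11 (θ θ' : ℝ) (hθ : 0 < θ) (hθ' : 0 < θ')
    (hirr : Irrational θ) (hirr' : Irrational θ')
    (t s : ℕ → ℝ) (a b : ℕ → ℤ)
    (ht0 : t 0 = θ) (ha : ∀ n, a n = ⌊t n⌋) (ht : ∀ n, t (n + 1) = 1 / (t n - a n))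
    (hs0 : s 0 = θ') (hb : ∀ n, b n = ⌊s n⌋) (hs : ∀ n, s (n + 1) = 1 / (s n - b n))
    (A B C D : ℤ) (hdet : A * D - B * C = 1 ∨ A * D - B * C = -1)
    (hrel : θ' = ((A : ℝ) * θ + B) / ((C : ℝ) * θ + D)) :
    ∃ m k : ℕ, ∀ j : ℕ, a (m + j) = b (k + j) := by
  classical
  -- basic facts about the Gauss iterations
  have tirr : ∀ n, Irrational (t n) := by
    intro n
    induction n with
    | zero => rw [ht0]; exact hirr
    | succ n ih =>
      rw [ht n, ha n, one_div]
      exact (Irrational.sub_intCast ih ⌊t n⌋).inv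
  have sirr : ∀ n, Irrational (s n) := by
    intro n
    induction n with
    | zero => rw [hs0]; exact hirr'
    | succ n ih =>
      rw [hs n, hb n, one_div]
      exact (Irrational.sub_intCast ih ⌊s n⌋).inv
  have fracpos : ∀ x : ℝ, Irrational x → 0 < x - ⌊x⌋ ∧ x - ⌊x⌋ < 1 := by
    intro x hx
    have h1 : (⌊x⌋ : ℝ) ≤ x := Int.floor_le x
    have h2 : x < ⌊x⌋ + 1 := Int.lt_floor_add_one x
    have h3 : x ≠ (⌊x⌋ : ℝ) := hx.ne_int ⌊x⌋
    constructor
    · rcases lt_of_le_of_ne h1 (Ne.symm h3) with h; linarith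
    · linarith
  have t1 : ∀ n, 1 < t (n + 1) := by
    intro n
    obtain ⟨h1, h2⟩ := fracpos (t n) (tirr n)
    rw [ht n, ha n]
    exact one_lt_one_div h1 h2
  have s1 : ∀ n, 1 < s (n + 1) := by
    intro n
    obtain ⟨h1, h2⟩ := fracpos (s n) (sirr n)
    rw [hs n, hb n]
    exact one_lt_one_div h1 h2
  have hrec_t : ∀ n, t n = (a n : ℝ) + 1 / t (n + 1) := by
    intro n
    obtain ⟨h1, _⟩ := fracpos (t n) (tirr n)
    rw [ht n, one_div_one_div, ha n]
    ring
  have hα : ∀ n, 1 ≤ a (n + 1) := by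
    intro n
    rw [ha (n+1)]
    exact Int.le_floor.2 (by exact_mod_cast (t1 n).le)
  -- WLOG the denominator is positive
  have hCD : ((C : ℝ) * θ + D) ≠ 0 := by
    intro h
    by_cases hC : C = 0
    · have hD : D ≠ 0 := by
        rcases hdet with h' | h' <;> · rw [hC] at h'; intro hD0; rw [hD0] at h'; omega
      rw [hC] at h
      simp at h
      exact hD (by exact_mod_cast h)
    · apply hirr
      refine ⟨(-D : ℚ) / (C : ℚ), ?_⟩
      have hCR : (C : ℝ) ≠ 0 := Int.cast_ne_zero.2 hC
      push_cast
      field_simp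
      linarith
  obtain ⟨A, B, C, D, hdet, hrel, hδ⟩ :
      ∃ A' B' C' D' : ℤ, (A' * D' - B' * C' = 1 ∨ A' * D' - B' * C' = -1) ∧
        θ' = ((A' : ℝ) * θ + B') / ((C' : ℝ) * θ + D') ∧ 0 < (C' : ℝ) * θ + D' := by
    rcases lt_or_gt_of_ne hCD with hneg | hpos
    · refine ⟨-A, -B, -C, -D, ?_, ?_, ?_⟩
      · rcases hdet with h | h
        · left; linarith
        · right; linarith
      · rw [hrel]
        rw [show ((-A : ℤ) : ℝ) * θ + ((-B : ℤ) : ℝ) = -((A : ℝ) * θ + B) by push_cast; ring,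
          show ((-C : ℤ) : ℝ) * θ + ((-D : ℤ) : ℝ) = -((C : ℝ) * θ + D) by push_cast; ring,
          neg_div_neg_eq]
      · push_cast; linarith
    · exact ⟨A, B, C, D, hdet, hrel, hpos⟩
  set δ : ℝ := (C : ℝ) * θ + D with hδdef
  -- the convergent matrices of θ
  have hid : ∀ n, (Serret11.uu a n : ℝ) * t n + Serret11.vv a n
      = θ * ((Serret11.ww a n : ℝ) * t n + Serret11.zz a n) := by
    intro n
    have := Serret11.UV_identity a t hrec_t t1 n
    rwa [ht0] at this
  have hdenpos := Serret11.UV_denom_pos a t hrec_t t1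
  have heps : ∀ n, |(Serret11.uu a n : ℝ) - θ * Serret11.ww a n| ≤ 1 := by
    intro n
    have := Serret11.UV_eps a t hrec_t t1 n
    rwa [ht0] at this
  have hwlb : ∀ n : ℕ, ((n : ℝ) + 1) ≤ (Serret11.ww a (n + 2) : ℝ) := by
    intro n; exact_mod_cast Serret11.ww_lb a hα n
  have hcIn : ∀ k, ((C * Serret11.uu a k + D * Serret11.ww a k : ℤ) : ℝ)
      = δ * Serret11.ww a k + C * ((Serret11.uu a k : ℝ) - θ * Serret11.ww a k) := by
    intro k; push_cast [hδdef]; ring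
  -- choose a large index
  obtain ⟨N, hN⟩ := exists_nat_gt ((2 * |(C : ℝ)| + 2) / δ)
  have hδN : 2 * |(C : ℝ)| + 2 < δ * N := by
    rw [div_lt_iff₀ hδ] at hN
    linarith [hN]
  have hwge : ∀ k : ℕ, (N : ℝ) ≤ Serret11.ww a (N + k + 2) := by
    intro k
    have h1 := hwlb (N + k)
    have h2 : (N : ℝ) ≤ (N : ℝ) + k + 1 := by
      have : (0:ℝ) ≤ (k:ℝ) := Nat.cast_nonneg k
      linarith
    push_cast at h1 ⊢
    linarith
  set n := N + 4 with hn
  set c2 : ℤ := C * Serret11.uu a n + D * Serret11.ww a n with hc2def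
  set d2 : ℤ := C * Serret11.uu a (N + 3) + D * Serret11.ww a (N + 3) with hd2def
  have habs : ∀ x : ℝ, |x| ≤ 1 → -(1:ℝ) ≤ x ∧ x ≤ 1 := fun x hx => abs_le.1 hx
  have hd2pos : 0 < d2 := by
    have h1 := habs _ (heps (N + 3))
    have h2 := hwge 1
    have : (0 : ℝ) < (d2 : ℝ) := by
      rw [hd2def, hcIn]
      have habsC := abs_nonneg (C : ℝ)
      have hC1 : -|(C:ℝ)| ≤ (C:ℝ) := neg_abs_le _
      have hC2 : (C:ℝ) ≤ |(C:ℝ)| := le_abs_self _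
      have hww : (0:ℝ) ≤ Serret11.ww a (N + 3) := by
        have := hwlb (N + 1); push_cast at this ⊢; linarith
      nlinarith [mul_le_mul_of_nonneg_left (h2) (le_of_lt hδ)]
    exact_mod_cast this
  have hc2d2 : d2 < c2 := by
    have h1 := habs _ (heps (N + 3))
    have h2 := habs _ (heps n)
    have hgapZ := Serret11.ww_gap a hα (N + 2)
    have hgap : (Serret11.ww a (N + 2) : ℝ) + Serret11.ww a (N + 3) ≤ Serret11.ww a n := by
      rw [hn]; exact_mod_cast hgapZ
    have h3 := hwge 0
    have : (d2 : ℝ) < c2 := by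
      rw [hc2def, hd2def, hcIn, hcIn]
      have hC1 : -|(C:ℝ)| ≤ (C:ℝ) := neg_abs_le _
      have hC2 : (C:ℝ) ≤ |(C:ℝ)| := le_abs_self _
      nlinarith [mul_le_mul_of_nonneg_left h3 (le_of_lt hδ)]
    exact_mod_cast this
  -- the Möbius relation at level n
  set y : ℝ := t n with hydef
  have hy1 : 1 < y := by rw [hydef, hn]; exact t1 (N + 3)
  set a2 : ℤ := A * Serret11.uu a n + B * Serret11.ww a n with ha2def
  set b2 : ℤ := A * Serret11.vv a n + B * Serret11.zz a n with hb2def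
  have hd2eq : d2 = C * Serret11.vv a n + D * Serret11.zz a n := by
    rw [hd2def, hn, Serret11.vvS, Serret11.zzS]
  have hDnpos : 0 < (Serret11.ww a n : ℝ) * y + Serret11.zz a n := hdenpos n
  have hidn := hid n
  have hrel2 : θ' = ((a2 : ℝ) * y + b2) / ((c2 : ℝ) * y + d2) := by
    have e1 : (a2 : ℝ) * y + b2
        = ((A : ℝ) * θ + B) * ((Serret11.ww a n : ℝ) * y + Serret11.zz a n) := by
      rw [ha2def, hb2def]
      push_cast
      linear_combination (A : ℝ) * hidn
    have e2 : (c2 : ℝ) * y + d2 = δ * ((Serret11.ww a n : ℝ) * y + Serret11.zz a n) := by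
      rw [hc2def, hd2eq, hδdef]
      push_cast
      linear_combination (C : ℝ) * hidn
    rw [e1, e2, mul_div_mul_right _ _ (ne_of_gt hDnpos), hrel]
  have hdet2 : a2 * d2 - b2 * c2 = 1 ∨ a2 * d2 - b2 * c2 = -1 := by
    have hkey : a2 * d2 - b2 * c2
        = (A * D - B * C) * (Serret11.uu a n * Serret11.zz a n
            - Serret11.vv a n * Serret11.ww a n) := by
      rw [ha2def, hb2def, hc2def, hd2eq]; ring
    rcases hdet with h | h <;> rcases Serret11.det_UV a n with h' | h' <;>
      rw [hkey, h, h'] <;> simp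
  -- decompose the matrix into a continued-fraction word
  obtain ⟨L, hL, hEq⟩ := Serret11.decompAux c2.toNat a2 b2 c2 d2
    (by rw [Int.toNat_of_nonneg (by omega : (0:ℤ) ≤ c2)]) hc2d2 hd2pos hdet2
  have hθ'app : s 0 = Serret11.app ((a2 / c2) :: L) y := by
    rw [hs0, hrel2]
    exact hEq y hy1
  -- strip the word using the Gauss iteration of θ'
  have strip : ∀ L' : List ℤ, (∀ e ∈ L', 1 ≤ e) → ∀ (j : ℕ) (e0 : ℤ),
      s j = Serret11.app (e0 :: L') y → ∃ k, s k = y := by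
    intro L'
    induction L' with
    | nil =>
      intro _ j e0 hj
      rw [Serret11.app_cons, Serret11.app_nil] at hj
      have hfl : ⌊s j⌋ = e0 := by
        rw [Int.floor_eq_iff]
        constructor
        · rw [hj]; nlinarith [one_div_pos.2 (show (0:ℝ) < y by linarith)]
        · rw [hj]
          have : 1 / y < 1 := by
            rw [div_lt_one (by linarith : (0:ℝ) < y)]; linarith
          push_cast; linarith
      refine ⟨j + 1, ?_⟩
      rw [hs j, hb j, hfl, hj]
      have : (e0 : ℝ) + 1 / y - e0 = 1 / y := by ring
      rw [this, one_div_one_div]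
    | cons e L'' ih =>
      intro hL' j e0 hj
      have hT : 1 < Serret11.app (e :: L'') y :=
        Serret11.app_gt_one _ hL' y hy1
      rw [Serret11.app_cons] at hj
      have hfl : ⌊s j⌋ = e0 := by
        rw [Int.floor_eq_iff]
        constructor
        · rw [hj]; nlinarith [one_div_pos.2 (show (0:ℝ) < Serret11.app (e :: L'') y by linarith)]
        · rw [hj]
          have : 1 / Serret11.app (e :: L'') y < 1 := by
            rw [div_lt_one (by linarith : (0:ℝ) < Serret11.app (e :: L'') y)]; linarith
          push_cast; linarith
      have hnext : s (j + 1) = Serret11.app (e :: L'') y := by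
        rw [hs j, hb j, hfl, hj]
        have : (e0 : ℝ) + 1 / Serret11.app (e :: L'') y - e0
            = 1 / Serret11.app (e :: L'') y := by ring
        rw [this, one_div_one_div]
      exact ih (fun x hx => hL' x (List.mem_cons_of_mem e hx)) (j + 1) e hnext
  obtain ⟨k, hk⟩ := strip L hL 0 (a2 / c2) hθ'app
  -- equal tails give equal coefficient sequences
  have htail : ∀ j, t (n + j) = s (k + j) := by
    intro j
    induction j with
    | zero => simpa [hydef] using hk.symm
    | succ j ih =>
      have : n + (j + 1) = (n + j) + 1 := by omega
      rw [this, ht (n + j), show k + (j+1) = (k+j)+1 from by omega, hs (k + j),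
        ha (n + j), hb (k + j), ih]
  exact ⟨n, k, fun j => by rw [ha (n + j), hb (k + j), htail j]⟩
end

section
/- If continued fraction partial quotients satisfy μ_{n+N} = μ_n for all n ≥ 1 (periodicity with period N), then the ratio of convergent-vector lengths |ω_{ν+N}|/|ω_ν| converges as ν → ∞ to a limit that is independent of ν mod N. -/
open Filter Complex

lemma aux_ratio (t d : ℤ) (lam lam' : ℝ)
    (hsum : lam + lam' = (t : ℝ)) (hprod : lam * lam' = (d : ℝ))
    (hlam : 1 < lam) (hlam' : |lam'| < lam)
    (f : ℕ → ℂ)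
    (hrec : ∀ k, f (k + 2) = (t : ℂ) * f (k + 1) - (d : ℂ) * f k)
    (hne : f 1 ≠ (lam' : ℂ) * f 0) :
    Tendsto (fun k => ‖f (k + 1)‖ / ‖f k‖) atTop (nhds lam) := by
  have hlampos : (0:ℝ) < lam := lt_trans one_pos hlam
  have hlamne : lam' ≠ lam := fun h => absurd hlam' (by rw [h]; exact not_lt.2 (le_abs_self lam))
  have hdenR : lam - lam' ≠ 0 := sub_ne_zero.2 (Ne.symm hlamne)
  have hden : (lam : ℂ) - (lam' : ℂ) ≠ 0 := by
    rw [← Complex.ofReal_sub]; exact_mod_cast hdenR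
  set A : ℂ := (f 1 - (lam' : ℂ) * f 0) / ((lam : ℂ) - (lam' : ℂ)) with hA_def
  set B : ℂ := ((lam : ℂ) * f 0 - f 1) / ((lam : ℂ) - (lam' : ℂ)) with hB_def
  have hA : A ≠ 0 := div_ne_zero (sub_ne_zero.2 hne) hden
  have htC : (t : ℂ) = (lam : ℂ) + (lam' : ℂ) := by
    rw [← Complex.ofReal_add, hsum]; norm_cast
  have hdC : (d : ℂ) = (lam : ℂ) * (lam' : ℂ) := by
    rw [← Complex.ofReal_mul, hprod]; norm_cast
  have key : ∀ k, f k = A * (lam : ℂ) ^ k + B * (lam' : ℂ) ^ k := by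
    have key2 : ∀ k, f k = A * (lam : ℂ) ^ k + B * (lam' : ℂ) ^ k ∧
        f (k+1) = A * (lam : ℂ) ^ (k+1) + B * (lam' : ℂ) ^ (k+1) := by
      intro k
      induction k with
      | zero =>
        constructor
        · rw [hA_def, hB_def]; field_simp; ring
        · rw [hA_def, hB_def]; field_simp; ring
      | succ n ih =>
        refine ⟨ih.2, ?_⟩
        rw [hrec n, ih.1, ih.2, htC, hdC]; ring
    exact fun k => (key2 k).1
  have hlamC : (lam : ℂ) ≠ 0 := by exact_mod_cast ne_of_gt hlampos
  set ρ : ℂ := (lam' : ℂ) / (lam : ℂ) with hρ_def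
  have hρ : ‖ρ‖ < 1 := by
    rw [hρ_def, norm_div, Complex.norm_real, Complex.norm_real,
      Real.norm_eq_abs, Real.norm_eq_abs, abs_of_pos hlampos, div_lt_one hlampos]
    exact hlam'
  have hg : ∀ k, f k / (lam : ℂ) ^ k = A + B * ρ ^ k := by
    intro k
    rw [key k, hρ_def, div_pow]
    field_simp
  have hgt : Tendsto (fun k => f k / (lam : ℂ) ^ k) atTop (nhds A) := by
    have h0 : Tendsto (fun k : ℕ => ρ ^ k) atTop (nhds 0) :=
      tendsto_pow_atTop_nhds_zero_of_norm_lt_one hρ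
    have : Tendsto (fun k : ℕ => A + B * ρ ^ k) atTop (nhds (A + B * 0)) :=
      tendsto_const_nhds.add (tendsto_const_nhds.mul h0)
    simpa [hg] using this
  have habs : Tendsto (fun k => ‖f k‖ / lam ^ k) atTop (nhds (‖A‖)) := by
    have := (continuous_norm.tendsto A).comp hgt
    have heq : ∀ k, ‖f k / (lam : ℂ) ^ k‖ = ‖f k‖ / lam ^ k := by
      intro k
      rw [norm_div, norm_pow, Complex.norm_real, Real.norm_eq_abs, abs_of_pos hlampos]
    exact this.congr fun k => by simp only [Function.comp]; exact heq k
  have habs1 : Tendsto (fun k => ‖f (k+1)‖ / lam ^ (k+1)) atTop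
      (nhds (‖A‖)) := habs.comp (tendsto_add_atTop_nat 1)
  have hAabs : ‖A‖ ≠ 0 := by simpa using hA
  have final : Tendsto (fun k => lam * (‖f (k+1)‖ / lam ^ (k+1)) /
      (‖f k‖ / lam ^ k)) atTop (nhds (lam * ‖A‖ / ‖A‖)) :=
    (tendsto_const_nhds.mul habs1).div habs hAabs
  have : lam * ‖A‖ / ‖A‖ = lam := by field_simp
  rw [this] at final
  refine final.congr fun k => ?_
  have hpow : (lam : ℝ) ^ k ≠ 0 := pow_ne_zero _ (ne_of_gt hlampos)
  have h1 : lam * (‖f (k+1)‖ / lam ^ (k+1)) = ‖f (k+1)‖ / lam ^ k := by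
    rw [pow_succ]; field_simp
  rw [h1, div_div_div_cancel_right₀]
  exact hpow

set_option maxHeartbeats 1000000

/-- If the partial quotients are periodic with period N, then the ratio
|ω_{ν+N}|/|ω_ν| of convergent-vector lengths converges as ν → ∞ (to a limit
independent of ν mod N). Vectors (p, q) ∈ ℝ² are encoded as p + q·i ∈ ℂ. -/
theorem stmt_14 (μ : ℕ → ℕ) (hμ : ∀ n, 1 ≤ n → 1 ≤ μ n)
    (N : ℕ) (hN : 1 ≤ N) (hper : ∀ n, 1 ≤ n → μ (n + N) = μ n)
    (p q : ℕ → ℤ)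
    (hp0 : p 0 = 0) (hq0 : q 0 = 1) (hp1 : p 1 = 1) (hq1 : q 1 = 0)
    (hp : ∀ n, p (n + 2) = (μ (n + 1) : ℤ) * p (n + 1) + p n)
    (hq : ∀ n, q (n + 2) = (μ (n + 1) : ℤ) * q (n + 1) + q n)
    (ω : ℕ → ℂ) (hω : ∀ n, ω n = (p n : ℂ) + (q n : ℂ) * Complex.I) :
    ∃ l : ℝ, Filter.Tendsto
      (fun ν => ‖ω (ν + N)‖ / ‖ω ν‖)
      Filter.atTop (nhds l) := by
  -- basic positivity facts about μ
  have hμ' : ∀ n : ℕ, (1:ℤ) ≤ (μ (n+1) : ℤ) := fun n => by exact_mod_cast hμ (n+1) (by omega)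
  -- p is nonnegative and monotone
  have hpm : ∀ n, 0 ≤ p n ∧ p n ≤ p (n+1) := by
    intro n
    induction n with
    | zero => rw [hp0, hp1]; omega
    | succ n ih =>
      refine ⟨le_trans ih.1 ih.2, ?_⟩
      rw [hp n]
      nlinarith [hμ' n, ih.1, ih.2]
  have hpmono : Monotone p := monotone_nat_of_le_succ (fun n => (hpm n).2)
  have hp_ge1 : ∀ n, 1 ≤ n → 1 ≤ p n := fun n hn => by
    have := hpmono hn; omega
  -- q is nonnegative
  have hqnn : ∀ n, 0 ≤ q n ∧ 0 ≤ q (n+1) := by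
    intro n
    induction n with
    | zero => rw [hq0, hq1]; omega
    | succ n ih =>
      refine ⟨ih.2, ?_⟩
      rw [hq n]
      nlinarith [hμ' n, ih.1, ih.2]
  have hq_step : ∀ n, q (n+1) ≤ q (n+2) := by
    intro n
    rw [hq n]
    nlinarith [hμ' n, (hqnn n).1, (hqnn n).2]
  have hqmono : Monotone (fun n => q (n+1)) := monotone_nat_of_le_succ hq_step
  have hq2 : q 2 = 1 := by rw [hq 0, hq1, hq0]; ring
  have hq_ge1 : ∀ n, 2 ≤ n → 1 ≤ q n := by
    intro n hn
    have h := hqmono (show 1 ≤ n - 1 by omega)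
    simp only at h
    have hn1 : n - 1 + 1 = n := by omega
    rw [hn1, hq2] at h
    exact h
  -- determinant
  have hdet : ∀ n, p (n+1) * q n - p n * q (n+1) = (-1:ℤ)^n := by
    intro n
    induction n with
    | zero => rw [hp0, hp1, hq0, hq1]; ring
    | succ n ih =>
      rw [pow_succ, hp n, hq n]
      linear_combination (-1:ℤ) * ih
  -- shift formula
  have hshift : ∀ n, (p (n+N) = p (N+1) * p n + p N * q n ∧ q (n+N) = q (N+1) * p n + q N * q n) ∧
      (p (n+1+N) = p (N+1) * p (n+1) + p N * q (n+1) ∧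
       q (n+1+N) = q (N+1) * p (n+1) + q N * q (n+1)) := by
    intro n
    induction n with
    | zero =>
      refine ⟨⟨?_, ?_⟩, ⟨?_, ?_⟩⟩
      · rw [Nat.zero_add, hp0, hq0]; ring
      · rw [Nat.zero_add, hp0, hq0]; ring
      · rw [Nat.zero_add, Nat.add_comm 1 N, hp1, hq1]; ring
      · rw [Nat.zero_add, Nat.add_comm 1 N, hp1, hq1]; ring
    | succ n ih =>
      refine ⟨ih.2, ?_, ?_⟩
      · have h1 : n + 1 + 1 + N = (n + N) + 2 := by omega
        have h3 : n + N + 1 = n + 1 + N := by omega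
        have h4 : n + 1 + 1 = n + 2 := by omega
        rw [h1, hp (n+N), h3, hper (n+1) (by omega), ih.2.1, ih.1.1, h4, hp n, hq n]
        ring
      · have h1 : n + 1 + 1 + N = (n + N) + 2 := by omega
        have h3 : n + N + 1 = n + 1 + N := by omega
        have h4 : n + 1 + 1 = n + 2 := by omega
        rw [h1, hq (n+N), h3, hper (n+1) (by omega), ih.2.2, ih.1.2, h4, hp n, hq n]
        ring
  have hshiftp : ∀ n, p (n+N) = p (N+1) * p n + p N * q n := fun n => (hshift n).1.1
  have hshiftq : ∀ n, q (n+N) = q (N+1) * p n + q N * q n := fun n => (hshift n).1.2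
  -- trace and determinant of the period matrix
  set t : ℤ := p (N+1) + q N with ht_def
  set d : ℤ := (-1:ℤ)^N with hd_def
  have hd' : p (N+1) * q N - p N * q (N+1) = d := hdet N
  -- Cayley–Hamilton style recurrences
  have hCHp : ∀ n, p (n + 2*N) = t * p (n+N) - d * p n := by
    intro n
    have h1 : n + 2*N = (n + N) + N := by ring
    rw [h1, hshiftp (n+N), hshiftp n, hshiftq n, ht_def, ← hd']
    ring
  have hCHq : ∀ n, q (n + 2*N) = t * q (n+N) - d * q n := by
    intro n
    have h1 : n + 2*N = (n + N) + N := by ring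
    rw [h1, hshiftq (n+N), hshiftp n, hshiftq n, ht_def, ← hd']
    ring
  have hωrec : ∀ n, ω (n + 2*N) = (t:ℂ) * ω (n+N) - (d:ℂ) * ω n := by
    intro n
    rw [hω, hω, hω, hCHp n, hCHq n]
    push_cast
    ring
  -- bounds on t
  have ht1 : 1 ≤ t := by
    have := hp_ge1 (N+1) (by omega)
    have := (hqnn N).1
    omega
  have htd : d + 2 ≤ t := by
    rcases Nat.even_or_odd N with he | ho
    · -- N even, N ≥ 2, d = 1, t ≥ 3
      have hd1 : d = 1 := by rw [hd_def, he.neg_one_pow]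
      have hN2 : 2 ≤ N := by
        rcases he with ⟨m, hm⟩; omega
      have hqN : 1 ≤ q N := hq_ge1 N hN2
      have hp3 : 2 ≤ p 3 := by
        have h2 : p 2 = (μ 1 : ℤ) := by rw [hp 0, hp0, hp1]; ring
        have h3 : p 3 = (μ 2 : ℤ) * p 2 + p 1 := hp 1
        have := hμ' 0
        have := hμ' 1
        rw [h3, h2, hp1]
        nlinarith
      have hpN1 : 2 ≤ p (N+1) := le_trans hp3 (hpmono (by omega : 3 ≤ N+1))
      omega
    · have hd1 : d = -1 := by rw [hd_def, ho.neg_one_pow]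
      omega
  -- the eigenvalues
  have hΔpos : (0:ℝ) < (t:ℝ)^2 - 4*(d:ℝ) := by
    have ht1' : (1:ℝ) ≤ (t:ℝ) := by exact_mod_cast ht1
    have htd' : (d:ℝ) + 2 ≤ (t:ℝ) := by exact_mod_cast htd
    have hdabs : (d:ℝ) = 1 ∨ (d:ℝ) = -1 := by
      rcases Nat.even_or_odd N with he | ho
      · left; rw [hd_def]; push_cast [he.neg_one_pow]; norm_num
      · right; rw [hd_def]; push_cast [ho.neg_one_pow]; norm_num
    rcases hdabs with h | h <;> rw [h] <;> nlinarith
  set s : ℝ := Real.sqrt ((t:ℝ)^2 - 4*(d:ℝ)) with hs_def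
  have hs2 : s^2 = (t:ℝ)^2 - 4*(d:ℝ) := Real.sq_sqrt hΔpos.le
  have hspos : 0 < s := Real.sqrt_pos.2 hΔpos
  set lam : ℝ := ((t:ℝ) + s)/2 with hlam_def
  set lam' : ℝ := ((t:ℝ) - s)/2 with hlam'_def
  have hsum : lam + lam' = (t:ℝ) := by rw [hlam_def, hlam'_def]; ring
  have hprod : lam * lam' = (d:ℝ) := by
    rw [hlam_def, hlam'_def]
    linear_combination (-(1:ℝ)/4) * hs2
  have ht1' : (1:ℝ) ≤ (t:ℝ) := by exact_mod_cast ht1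
  have htd' : (d:ℝ) + 2 ≤ (t:ℝ) := by exact_mod_cast htd
  have hlam1 : 1 < lam := by
    rw [hlam_def]
    nlinarith [hs2, hspos, sq_nonneg (s - (2 - (t:ℝ)))]
  have hdpm : (d:ℝ) = 1 ∨ (d:ℝ) = -1 := by
    rcases Nat.even_or_odd N with he | ho
    · left; rw [hd_def]; push_cast [he.neg_one_pow]; norm_num
    · right; rw [hd_def]; push_cast [ho.neg_one_pow]; norm_num
  have hlam'1 : |lam'| < 1 := by
    rw [abs_lt, hlam'_def]
    rcases hdpm with h | h <;> rw [h] at hs2 htd' <;> constructor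
    · nlinarith [hs2, hspos]
    · nlinarith [hs2, hspos]
    · nlinarith [hs2, hspos, ht1']
    · nlinarith [hs2, hspos, ht1']
  have hlam'lam : |lam'| < lam := lt_trans hlam'1 hlam1
  -- real parts of ω
  have hre : ∀ n, (ω n).re = (p n : ℝ) := by
    intro n
    rw [hω]
    simp
  -- apply aux_ratio for each residue r
  have hsub : ∀ r, Filter.Tendsto
      (fun k => ‖ω ((k+1)*N + r)‖ / ‖ω (k*N + r)‖)
      Filter.atTop (nhds lam) := by
    intro r
    have hrec : ∀ k, (fun k => ω (k*N + r)) (k + 2) =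
        (t:ℂ) * (fun k => ω (k*N + r)) (k + 1) - (d:ℂ) * (fun k => ω (k*N + r)) k := by
      intro k
      simp only
      have h1 : (k+2)*N + r = (k*N + r) + 2*N := by ring
      have h2 : (k+1)*N + r = (k*N + r) + N := by ring
      rw [h1, h2, hωrec]
    have hne : (fun k => ω (k*N + r)) 1 ≠ (lam' : ℂ) * (fun k => ω (k*N + r)) 0 := by
      simp only [one_mul, zero_mul, zero_add]
      intro hcon
      have hre_eq : (p (N + r) : ℝ) = lam' * (p r : ℝ) := by
        have h := congrArg Complex.re hcon
        rw [hre (N+r), hω r] at h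
        simpa [Complex.mul_re] using h
      rcases Nat.eq_zero_or_pos r with hr0 | hrpos
      · rw [hr0, hp0] at hre_eq
        have hpN : 1 ≤ p N := hp_ge1 N hN
        have h1 : (1:ℝ) ≤ (p (N + 0) : ℝ) := by exact_mod_cast hpN
        rw [hre_eq] at h1
        norm_num at h1
      · have hpr : 1 ≤ p r := hp_ge1 r hrpos
        have hpr' : (1:ℝ) ≤ (p r : ℝ) := by exact_mod_cast hpr
        have hmon' : (p r : ℝ) ≤ (p (N+r) : ℝ) := by
          exact_mod_cast hpmono (by omega : r ≤ N + r)
        have h2 : lam' * (p r : ℝ) ≤ |lam'| * (p r : ℝ) := by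
          have := le_abs_self lam'
          nlinarith
        have h3 : |lam'| * (p r : ℝ) < 1 * (p r : ℝ) :=
          mul_lt_mul_of_pos_right hlam'1 (by linarith)
        nlinarith
    have := aux_ratio t d lam lam' hsum hprod hlam1 hlam'lam (fun k => ω (k*N + r)) hrec hne
    exact this
  refine ⟨lam, Metric.tendsto_atTop.2 fun ε hε => ?_⟩
  have hL : ∀ r, ∃ K, ∀ k ≥ K,
      dist (‖ω ((k+1)*N + r)‖ / ‖ω (k*N + r)‖) lam < ε :=
    fun r => Metric.tendsto_atTop.1 (hsub r) ε hε
  choose K hK using hL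
  refine ⟨N * ((Finset.range N).sup K + 1), fun ν hν => ?_⟩
  obtain ⟨k, r, hrN, rfl⟩ : ∃ k r, r < N ∧ ν = k * N + r :=
    ⟨ν / N, ν % N, Nat.mod_lt _ (by omega), by
      rw [mul_comm]; exact (Nat.div_add_mod ν N).symm⟩
  have hSr : K r ≤ (Finset.range N).sup K := Finset.le_sup (Finset.mem_range.2 hrN)
  have h2 : N * ((Finset.range N).sup K + 1) < N * (k + 1) := by
    calc N * ((Finset.range N).sup K + 1) ≤ k * N + r := hν
    _ < k * N + N := by omega
    _ = N * (k+1) := by ring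
  have h3 : (Finset.range N).sup K + 1 < k + 1 := Nat.lt_of_mul_lt_mul_left h2
  have hνN : k * N + r + N = (k+1)*N + r := by ring
  rw [hνN]
  exact hK r k (by omega)
end
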